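/- If Â₁ and Â₂ are MVE-algebras for the model (𝒳, 𝒜, 𝒫), then Â = σ(Â₁, Â₂), the smallest σ-algebra containing both, is also an MVE-algebra. -/

import Mathlib

open MeasureTheory ProbabilityTheory

/-- `χ` is a square-integrable unbiased estimator of zero for the family `P`. -/
def IsUEZero {𝓧 Θ : Type*} [MeasurableSpace 𝓧] (P : Θ → Measure 𝓧) (χ : 𝓧 → ℝ) : Prop :=
  Measurable χ ∧ (∀ θ, MemLp χ 2 (P θ)) ∧ ∀ θ, ∫ x, χ x ∂P θ = 0

/-- `g` is a UMVUE: minimal variance at every `θ` among all unbiased estimators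
(with finite second moments) of the same parametric function. -/
def IsUMVUE {𝓧 Θ : Type*} [MeasurableSpace 𝓧] (P : Θ → Measure 𝓧) (g : 𝓧 → ℝ) : Prop :=
  Measurable g ∧ (∀ θ, MemLp g 2 (P θ)) ∧
    ∀ g' : 𝓧 → ℝ, Measurable g' → (∀ θ, MemLp g' 2 (P θ)) →
      (∀ θ, ∫ x, g' x ∂P θ = ∫ x, g x ∂P θ) →
      ∀ θ, variance g (P θ) ≤ variance g' (P θ)

/-- A sub-σ-algebra `𝓐` of the basic σ-algebra `m` is an MVE-algebra for the family `P`
if every `𝓐`-measurable statistic with finite second moments under every `P θ`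
is a UMVUE of its expectation. -/
def IsMVEAlgebra {𝓧 Θ : Type*} [m : MeasurableSpace 𝓧] (P : Θ → Measure 𝓧)
    (𝓐 : MeasurableSpace 𝓧) : Prop :=
  𝓐 ≤ m ∧
    ∀ g : 𝓧 → ℝ, Measurable[𝓐] g → (∀ θ, MemLp g 2 (P θ)) → @IsUMVUE 𝓧 Θ m P g

lemma mulL2_int {𝓧 : Type*} [MeasurableSpace 𝓧] {μ : Measure 𝓧} {f g : 𝓧 → ℝ}
    (hf : MemLp f 2 μ) (hg : MemLp g 2 μ) :
    Integrable (fun x => f x * g x) μ := by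
  have h : MemLp (f • g) 1 μ := hg.smul hf
  rw [memLp_one_iff_integrable] at h
  exact h

lemma memL2_max {𝓧 : Type*} [MeasurableSpace 𝓧] {μ : Measure 𝓧} {f : 𝓧 → ℝ}
    (hfM : Measurable f) (hf : MemLp f 2 μ) : MemLp (fun x => max (f x) 0) 2 μ := by
  refine hf.of_le (hfM.max measurable_const).aestronglyMeasurable (ae_of_all _ fun x => ?_)
  rcases le_total (f x) 0 with h | h
  · simp [max_eq_right h]
  · simp [max_eq_left h, Real.norm_eq_abs, le_abs_self, abs_of_nonneg h]

lemma ortho {𝓧 Θ : Type*} [m : MeasurableSpace 𝓧] {P : Θ → Measure 𝓧}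
    [∀ θ, IsProbabilityMeasure (P θ)]
    {𝓐 : MeasurableSpace 𝓧} (h : @IsMVEAlgebra 𝓧 Θ m P 𝓐)
    {g : 𝓧 → ℝ} (hgm : Measurable[𝓐] g) (hg2 : ∀ θ, MemLp g 2 (P θ))
    {χ : 𝓧 → ℝ} (hχ : @IsUEZero 𝓧 Θ m P χ) (θ : Θ) :
    ∫ x, g x * χ x ∂P θ = 0 := by
  obtain ⟨hgM, -, humv⟩ := h.2 g hgm hg2
  obtain ⟨hχM, hχ2, hχ0⟩ := hχ
  set c := ∫ x, g x * χ x ∂P θ with hc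
  set s := ∫ x, χ x * χ x ∂P θ with hs
  have hs0 : 0 ≤ s := integral_nonneg fun x => mul_self_nonneg _
  set t : ℝ := -c / (s + 1) with ht
  set g' : 𝓧 → ℝ := fun x => g x + t * χ x with hg'
  have hg'M : Measurable[m] g' := hgM.add (hχM.const_mul t)
  have hg'2 : ∀ θ', MemLp g' 2 (P θ') := fun θ' => (hg2 θ').add ((hχ2 θ').const_mul t)
  have hub : ∀ θ', ∫ x, g' x ∂P θ' = ∫ x, g x ∂P θ' := by
    intro θ'
    simp only [hg']
    rw [integral_add ((hg2 θ').integrable one_le_two)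
      (((hχ2 θ').integrable one_le_two).const_mul t), integral_const_mul, hχ0 θ', mul_zero,
      add_zero]
  have hvar := humv g' hg'M hg'2 hub θ
  have hgg : Integrable (fun x => g x * g x) (P θ) := @mulL2_int 𝓧 m _ _ _ (hg2 θ) (hg2 θ)
  have hgχ : Integrable (fun x => g x * χ x) (P θ) := @mulL2_int 𝓧 m _ _ _ (hg2 θ) (hχ2 θ)
  have hχχ : Integrable (fun x => χ x * χ x) (P θ) := @mulL2_int 𝓧 m _ _ _ (hχ2 θ) (hχ2 θ)
  have hvg := variance_eq_sub (hg2 θ)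
  have hvg' := variance_eq_sub (hg'2 θ)
  simp only [Pi.pow_apply] at hvg hvg'
  have hint2 : ∫ x, g' x ^ 2 ∂P θ
      = ∫ x, g x * g x ∂P θ + (2 * t * c + t ^ 2 * s) := by
    have hsq : ∀ x, g' x ^ 2
        = g x * g x + ((2 * t) * (g x * χ x) + t ^ 2 * (χ x * χ x)) := by
      intro x; simp only [hg']; ring
    have e0 : ∫ x, g' x ^ 2 ∂P θ
        = ∫ x, (g x * g x + ((2 * t) * (g x * χ x) + t ^ 2 * (χ x * χ x))) ∂P θ :=
      integral_congr_ae (Filter.Eventually.of_forall hsq)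
    have hI2 : Integrable (fun x => 2 * t * (g x * χ x) + t ^ 2 * (χ x * χ x)) (P θ) :=
      (hgχ.const_mul _).add (hχχ.const_mul _)
    rw [e0, integral_add hgg hI2, integral_add (hgχ.const_mul (2 * t)) (hχχ.const_mul (t ^ 2)),
      integral_const_mul, integral_const_mul, ← hc, ← hs]
  have hineq : (0:ℝ) ≤ 2 * t * c + t ^ 2 * s := by
    have h1 : variance g (P θ) = ∫ x, g x * g x ∂P θ - (∫ x, g x ∂P θ) ^ 2 := by
      rw [hvg]; congr 1
      apply integral_congr_ae; filter_upwards with x; simp [sq]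
    have h2 : variance g' (P θ)
        = ∫ x, g x * g x ∂P θ + (2 * t * c + t ^ 2 * s) - (∫ x, g x ∂P θ) ^ 2 := by
      rw [hvg', hub θ, ← hint2]
    rw [h1, h2] at hvar
    linarith
  have hs1 : (0:ℝ) < s + 1 := by linarith
  have key : 2 * t * c + t ^ 2 * s = -(c ^ 2 * (s + 2)) / (s + 1) ^ 2 := by
    rw [ht]; field_simp; ring
  rw [key] at hineq
  have h3 : (0:ℝ) * ((s + 1) ^ 2) ≤ -(c ^ 2 * (s + 2)) := by
    rwa [← le_div_iff₀ (by positivity)]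
  have hc2 : c ^ 2 = 0 := le_antisymm (by nlinarith) (sq_nonneg c)
  exact pow_eq_zero_iff (two_ne_zero) |>.mp hc2

lemma umvue_of_ortho {𝓧 Θ : Type*} [m : MeasurableSpace 𝓧] {P : Θ → Measure 𝓧}
    [∀ θ, IsProbabilityMeasure (P θ)]
    {g : 𝓧 → ℝ} (hgM : Measurable g) (hg2 : ∀ θ, MemLp g 2 (P θ))
    (H : ∀ χ : 𝓧 → ℝ, IsUEZero P χ → ∀ θ, ∫ x, g x * χ x ∂P θ = 0) :
    IsUMVUE P g := by
  refine ⟨hgM, hg2, fun g' hg'M hg'2 hub θ => ?_⟩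
  set χ : 𝓧 → ℝ := fun x => g' x - g x with hχdef
  have hχ2 : ∀ θ', MemLp χ 2 (P θ') := fun θ' => (hg'2 θ').sub (hg2 θ')
  have hχUE : IsUEZero P χ := by
    refine ⟨hg'M.sub hgM, hχ2, fun θ' => ?_⟩
    simp only [hχdef]
    rw [integral_sub ((hg'2 θ').integrable one_le_two) ((hg2 θ').integrable one_le_two),
      hub θ', sub_self]
  have hortho := H χ hχUE θ
  have hχχ : Integrable (fun x => χ x * χ x) (P θ) := mulL2_int (hχ2 θ) (hχ2 θ)
  have hgχ : Integrable (fun x => g x * χ x) (P θ) := mulL2_int (hg2 θ) (hχ2 θ)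
  have hgg : Integrable (fun x => g x * g x) (P θ) := mulL2_int (hg2 θ) (hg2 θ)
  have hvg := variance_eq_sub (hg2 θ)
  have hvg' := variance_eq_sub (hg'2 θ)
  simp only [Pi.pow_apply] at hvg hvg'
  have hsq : ∀ x, g' x ^ 2 = g x ^ 2 + (2 * (g x * χ x) + χ x * χ x) := by
    intro x; simp only [hχdef]; ring
  have hgg' : Integrable (fun x => g x ^ 2) (P θ) := (hg2 θ).integrable_sq
  have hI2 : Integrable (fun x => 2 * (g x * χ x) + χ x * χ x) (P θ) :=
    (hgχ.const_mul _).add hχχ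
  have h2 : ∫ x, g' x ^ 2 ∂P θ
      = ∫ x, g x ^ 2 ∂P θ + (2 * ∫ x, g x * χ x ∂P θ + ∫ x, χ x * χ x ∂P θ) := by
    have e0 : ∫ x, g' x ^ 2 ∂P θ = ∫ x, (g x ^ 2 + (2 * (g x * χ x) + χ x * χ x)) ∂P θ :=
      integral_congr_ae (Filter.Eventually.of_forall hsq)
    rw [e0, integral_add hgg' hI2, integral_add (hgχ.const_mul 2) hχχ, integral_const_mul]
  have hχχ0 : 0 ≤ ∫ x, χ x * χ x ∂P θ := integral_nonneg fun x => mul_self_nonneg _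
  rw [hvg, hvg', hub θ, h2, hortho]
  linarith

lemma indMul_UEZero {𝓧 Θ : Type*} [m : MeasurableSpace 𝓧] {P : Θ → Measure 𝓧}
    [∀ θ, IsProbabilityMeasure (P θ)]
    {𝓐 : MeasurableSpace 𝓧} (h : @IsMVEAlgebra 𝓧 Θ m P 𝓐)
    {χ : 𝓧 → ℝ} (hχ : @IsUEZero 𝓧 Θ m P χ) {A : Set 𝓧} (hA : MeasurableSet[𝓐] A) :
    @IsUEZero 𝓧 Θ m P (fun x => A.indicator (fun _ => (1:ℝ)) x * χ x) := by
  have hAm : MeasurableSet[m] A := h.1 A hA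
  have hindM : Measurable[m] (A.indicator (fun _ => (1:ℝ))) :=
    measurable_const.indicator hAm
  have hind𝓐 : Measurable[𝓐] (A.indicator (fun _ => (1:ℝ))) :=
    measurable_const.indicator hA
  have hind2 : ∀ θ, MemLp (A.indicator (fun _ => (1:ℝ))) 2 (P θ) := fun θ =>
    (memLp_const (1:ℝ)).indicator hAm
  refine ⟨hindM.mul hχ.1, fun θ => ?_, fun θ => @ortho 𝓧 Θ m P _ 𝓐 h _ hind𝓐 hind2 _ hχ θ⟩
  refine (hχ.2.1 θ).of_le ((hindM.mul hχ.1).aestronglyMeasurable) (ae_of_all _ fun x => ?_)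
  by_cases hx : x ∈ A <;> simp [Set.indicator, hx, Real.norm_eq_abs, abs_nonneg]

theorem stmt6 {𝓧 Θ : Type*} [m : MeasurableSpace 𝓧]
    (P : Θ → Measure 𝓧) [∀ θ, IsProbabilityMeasure (P θ)]
    (𝓐₁ 𝓐₂ : MeasurableSpace 𝓧)
    (h₁ : @IsMVEAlgebra 𝓧 Θ m P 𝓐₁) (h₂ : @IsMVEAlgebra 𝓧 Θ m P 𝓐₂) :
    @IsMVEAlgebra 𝓧 Θ m P (𝓐₁ ⊔ 𝓐₂) := by
  have hle : 𝓐₁ ⊔ 𝓐₂ ≤ m := sup_le h₁.1 h₂.1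
  refine ⟨hle, fun g hgm hg2 => ?_⟩
  have hgM : Measurable[m] g := hgm.mono hle le_rfl
  apply @umvue_of_ortho 𝓧 Θ m P _ g hgM hg2
  intro χ hχ θ
  obtain ⟨hχM, hχ2, hχ0⟩ := hχ
  have hχi : Integrable χ (P θ) := (hχ2 θ).integrable one_le_two
  -- Step 1: set integrals of χ vanish on intersections A₁ ∩ A₂
  have key : ∀ A₁ A₂ : Set 𝓧, MeasurableSet[𝓐₁] A₁ → MeasurableSet[𝓐₂] A₂ → ∀ θ',
      ∫ x in A₁ ∩ A₂, χ x ∂P θ' = 0 := by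
    intro A₁ A₂ hA₁ hA₂ θ'
    have hU1 : @IsUEZero 𝓧 Θ m P (fun x => A₁.indicator (fun _ => (1:ℝ)) x * χ x) :=
      @indMul_UEZero 𝓧 Θ m P _ 𝓐₁ h₁ χ ⟨hχM, hχ2, hχ0⟩ A₁ hA₁
    have h2' := @ortho 𝓧 Θ m P _ 𝓐₂ h₂ _
      (measurable_const.indicator hA₂ :
        Measurable[𝓐₂] (A₂.indicator (fun _ => (1:ℝ))))
      (fun _ => (memLp_const (1:ℝ)).indicator (h₂.1 A₂ hA₂)) _ hU1 θ'
    rw [← @MeasureTheory.integral_indicator 𝓧 ℝ m _ _ χ (A₁ ∩ A₂) (P θ')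
      ((h₁.1 A₁ hA₁).inter (h₂.1 A₂ hA₂)), ← h2']
    apply integral_congr_ae; filter_upwards with x
    by_cases hx1 : x ∈ A₁ <;> by_cases hx2 : x ∈ A₂ <;>
      simp [Set.indicator_apply, hx1, hx2, Set.mem_inter_iff]
  -- π-system generating 𝓐₁ ⊔ 𝓐₂
  set C : Set (Set 𝓧) :=
    {s | ∃ A₁ A₂ : Set 𝓧, MeasurableSet[𝓐₁] A₁ ∧ MeasurableSet[𝓐₂] A₂ ∧ s = A₁ ∩ A₂} with hCdef
  have hCpi : IsPiSystem C := by
    rintro s ⟨B₁, B₂, hB₁, hB₂, rfl⟩ u ⟨D₁, D₂, hD₁, hD₂, rfl⟩ -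
    exact ⟨B₁ ∩ D₁, B₂ ∩ D₂, hB₁.inter hD₁, hB₂.inter hD₂, by ext x; simp; tauto⟩
  have hgen : 𝓐₁ ⊔ 𝓐₂ = MeasurableSpace.generateFrom C := by
    refine le_antisymm (sup_le ?_ ?_) (MeasurableSpace.generateFrom_le ?_)
    · intro s hs
      exact MeasurableSpace.measurableSet_generateFrom
        ⟨s, Set.univ, hs, MeasurableSet.univ, (Set.inter_univ s).symm⟩
    · intro s hs
      exact MeasurableSpace.measurableSet_generateFrom
        ⟨Set.univ, s, MeasurableSet.univ, hs, (Set.univ_inter s).symm⟩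
    · rintro s ⟨B₁, B₂, hB₁, hB₂, rfl⟩
      exact MeasurableSet.inter ((le_sup_left : 𝓐₁ ≤ 𝓐₁ ⊔ 𝓐₂) _ hB₁)
        ((le_sup_right : 𝓐₂ ≤ 𝓐₁ ⊔ 𝓐₂) _ hB₂)
  -- positive and negative parts of χ as densities
  set μp := (P θ).withDensity (fun x => ENNReal.ofReal (χ x)) with hμpdef
  set μm := (P θ).withDensity (fun x => ENNReal.ofReal (-χ x)) with hμmdef
  have hμpA : ∀ A : Set 𝓧, MeasurableSet[m] A →
      μp A = ENNReal.ofReal (∫ x in A, max (χ x) 0 ∂P θ) := by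
    intro A hA
    rw [hμpdef, withDensity_apply _ hA,
      ofReal_integral_eq_lintegral_ofReal (hχi.pos_part.restrict)
        (ae_of_all _ fun x => le_max_right _ _)]
    apply lintegral_congr; intro x
    rcases le_total (χ x) 0 with hx | hx
    · rw [max_eq_right hx, ENNReal.ofReal_zero, ENNReal.ofReal_of_nonpos hx]
    · rw [max_eq_left hx]
  have hμmA : ∀ A : Set 𝓧, MeasurableSet[m] A →
      μm A = ENNReal.ofReal (∫ x in A, max (-χ x) 0 ∂P θ) := by
    intro A hA
    rw [hμmdef, withDensity_apply _ hA,
      ofReal_integral_eq_lintegral_ofReal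
        (show Integrable (fun x => max (-χ x) 0) ((P θ).restrict A) from
          hχi.neg.pos_part.restrict)
        (ae_of_all _ fun x => le_max_right _ _)]
    apply lintegral_congr; intro x
    rcases le_total (-χ x) 0 with hx | hx
    · rw [max_eq_right hx, ENNReal.ofReal_zero, ENNReal.ofReal_of_nonpos hx]
    · rw [max_eq_left hx]
  have hμeq : ∀ A : Set 𝓧, MeasurableSet[m] A → (∫ x in A, χ x ∂P θ = 0) → μp A = μm A := by
    intro A hA h0
    rw [hμpA A hA, hμmA A hA]
    have hsub : ∫ x in A, (max (χ x) 0 - max (-χ x) 0) ∂P θ = 0 := by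
      simp_rw [max_zero_sub_max_neg_zero_eq_self]; exact h0
    have i1 : Integrable (fun x => max (χ x) 0) ((P θ).restrict A) := hχi.pos_part.restrict
    have i2 : Integrable (fun x => max (-χ x) 0) ((P θ).restrict A) :=
      hχi.neg.pos_part.restrict
    rw [integral_sub i1 i2] at hsub
    congr 1; linarith
  have hfp : IsFiniteMeasure μp := by
    rw [hμpdef]
    refine isFiniteMeasure_withDensity ?_
    have hb : ∀ x, ENNReal.ofReal (χ x) ≤ ‖χ x‖₊ := fun x => by
      rw [← enorm_eq_nnnorm, ← ofReal_norm, Real.norm_eq_abs]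
      exact ENNReal.ofReal_le_ofReal (le_abs_self _)
    exact ne_of_lt (lt_of_le_of_lt (lintegral_mono hb) hχi.2)
  have htrim : μp.trim hle = μm.trim hle := by
    haveI : IsFiniteMeasure (μp.trim hle) :=
      ⟨by rw [trim_measurableSet_eq hle MeasurableSet.univ]; exact measure_lt_top μp _⟩
    refine ext_of_generate_finite C hgen hCpi ?_ ?_
    · rintro u ⟨B₁, B₂, hB₁, hB₂, rfl⟩
      have hu : MeasurableSet[𝓐₁ ⊔ 𝓐₂] (B₁ ∩ B₂) :=
        MeasurableSet.inter ((le_sup_left : 𝓐₁ ≤ 𝓐₁ ⊔ 𝓐₂) _ hB₁)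
          ((le_sup_right : 𝓐₂ ≤ 𝓐₁ ⊔ 𝓐₂) _ hB₂)
      rw [trim_measurableSet_eq hle hu, trim_measurableSet_eq hle hu]
      exact hμeq _ (hle _ hu) (key B₁ B₂ hB₁ hB₂ θ)
    · have hu : MeasurableSet[𝓐₁ ⊔ 𝓐₂] (Set.univ : Set 𝓧) := MeasurableSet.univ
      rw [trim_measurableSet_eq hle hu, trim_measurableSet_eq hle hu]
      have h0 := key Set.univ Set.univ MeasurableSet.univ MeasurableSet.univ θ
      rw [Set.univ_inter] at h0
      exact hμeq _ (hle _ hu) h0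
  -- main step: nonnegative 𝓐̂-measurable functions integrate equally against χ⁺ and χ⁻
  have main : ∀ f : 𝓧 → ℝ, Measurable[𝓐₁ ⊔ 𝓐₂] f → (∀ x, 0 ≤ f x) →
      ∫ x, f x * max (χ x) 0 ∂P θ = ∫ x, f x * max (-χ x) 0 ∂P θ := by
    intro f hf𝓐 hf0
    have hfM : Measurable[m] f := hf𝓐.mono hle le_rfl
    have e1 : ∫ x, f x * max (χ x) 0 ∂P θ
        = (∫⁻ x, ENNReal.ofReal (f x * max (χ x) 0) ∂P θ).toReal :=
      integral_eq_lintegral_of_nonneg_ae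
        (ae_of_all _ fun x => mul_nonneg (hf0 x) (le_max_right _ _))
        ((hfM.mul (hχM.max measurable_const)).aestronglyMeasurable)
    have e1' : ∫ x, f x * max (-χ x) 0 ∂P θ
        = (∫⁻ x, ENNReal.ofReal (f x * max (-χ x) 0) ∂P θ).toReal :=
      integral_eq_lintegral_of_nonneg_ae
        (ae_of_all _ fun x => mul_nonneg (hf0 x) (le_max_right _ _))
        ((hfM.mul (hχM.neg.max measurable_const)).aestronglyMeasurable)
    have e2 : ∫⁻ x, ENNReal.ofReal (f x * max (χ x) 0) ∂P θ
        = ∫⁻ x, ENNReal.ofReal (f x) ∂μp := by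
      rw [hμpdef, lintegral_withDensity_eq_lintegral_mul _ hχM.ennreal_ofReal
        hfM.ennreal_ofReal]
      apply lintegral_congr; intro x
      simp only [Pi.mul_apply]
      rcases le_total (χ x) 0 with hx | hx
      · rw [max_eq_right hx, mul_zero, ENNReal.ofReal_zero, ENNReal.ofReal_of_nonpos hx,
          zero_mul]
      · rw [max_eq_left hx, ENNReal.ofReal_mul (hf0 x), mul_comm]
    have e2' : ∫⁻ x, ENNReal.ofReal (f x * max (-χ x) 0) ∂P θ
        = ∫⁻ x, ENNReal.ofReal (f x) ∂μm := by
      rw [hμmdef, lintegral_withDensity_eq_lintegral_mul _ (show Measurable[m] (fun x => -χ x) from hχM.neg).ennreal_ofReal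
        hfM.ennreal_ofReal]
      apply lintegral_congr; intro x
      simp only [Pi.mul_apply]
      rcases le_total (-χ x) 0 with hx | hx
      · rw [max_eq_right hx, mul_zero, ENNReal.ofReal_zero, ENNReal.ofReal_of_nonpos hx,
          zero_mul]
      · rw [max_eq_left hx, ENNReal.ofReal_mul (hf0 x), mul_comm]
    have e3 : ∫⁻ x, ENNReal.ofReal (f x) ∂μp = ∫⁻ x, ENNReal.ofReal (f x) ∂μm := by
      rw [← lintegral_trim hle hf𝓐.ennreal_ofReal, ← lintegral_trim hle hf𝓐.ennreal_ofReal,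
        htrim]
    rw [e1, e1', e2, e2', e3]
  -- decompose g and χ into positive and negative parts
  have hgp𝓐 : Measurable[𝓐₁ ⊔ 𝓐₂] (fun x => max (g x) 0) := hgm.max measurable_const
  have hgm𝓐 : Measurable[𝓐₁ ⊔ 𝓐₂] (fun x => max (-g x) 0) := hgm.neg.max measurable_const
  have hgp2 : MemLp (fun x => max (g x) 0) 2 (P θ) := @memL2_max 𝓧 m _ _ hgM (hg2 θ)
  have hgm2 : MemLp (fun x => max (-g x) 0) 2 (P θ) := @memL2_max 𝓧 m _ _ hgM.neg (hg2 θ).neg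
  have hχp2 : MemLp (fun x => max (χ x) 0) 2 (P θ) := @memL2_max 𝓧 m _ _ hχM (hχ2 θ)
  have hχm2 : MemLp (fun x => max (-χ x) 0) 2 (P θ) := @memL2_max 𝓧 m _ _ hχM.neg (hχ2 θ).neg
  have Ipp : Integrable (fun x => max (g x) 0 * max (χ x) 0) (P θ) :=
    @mulL2_int 𝓧 m _ _ _ hgp2 hχp2
  have Ipm : Integrable (fun x => max (g x) 0 * max (-χ x) 0) (P θ) :=
    @mulL2_int 𝓧 m _ _ _ hgp2 hχm2
  have Imp : Integrable (fun x => max (-g x) 0 * max (χ x) 0) (P θ) :=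
    @mulL2_int 𝓧 m _ _ _ hgm2 hχp2
  have Imm : Integrable (fun x => max (-g x) 0 * max (-χ x) 0) (P θ) :=
    @mulL2_int 𝓧 m _ _ _ hgm2 hχm2
  have expand : ∀ x, g x * χ x
      = (max (g x) 0 * max (χ x) 0 - max (g x) 0 * max (-χ x) 0)
        - (max (-g x) 0 * max (χ x) 0 - max (-g x) 0 * max (-χ x) 0) := by
    intro x
    have e1 := max_zero_sub_max_neg_zero_eq_self (g x)
    have e2 := max_zero_sub_max_neg_zero_eq_self (χ x)
    conv_lhs => rw [← e1, ← e2]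
    ring
  have hfinal : ∫ x, g x * χ x ∂P θ
      = ((∫ x, max (g x) 0 * max (χ x) 0 ∂P θ) - ∫ x, max (g x) 0 * max (-χ x) 0 ∂P θ)
        - ((∫ x, max (-g x) 0 * max (χ x) 0 ∂P θ)
          - ∫ x, max (-g x) 0 * max (-χ x) 0 ∂P θ) := by
    have I1 : Integrable
        (fun x => max (g x) 0 * max (χ x) 0 - max (g x) 0 * max (-χ x) 0) (P θ) := Ipp.sub Ipm
    have I2 : Integrable
        (fun x => max (-g x) 0 * max (χ x) 0 - max (-g x) 0 * max (-χ x) 0) (P θ) :=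
      Imp.sub Imm
    rw [← integral_sub Ipp Ipm, ← integral_sub Imp Imm, ← integral_sub I1 I2]
    exact integral_congr_ae (ae_of_all _ expand)
  rw [hfinal, main _ hgp𝓐 (fun x => le_max_right _ _), main _ hgm𝓐 (fun x => le_max_right _ _)]
  ring
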